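/- Let X be a random vector in ℝ^d with characteristic function φ(k) = E[exp(i k·X)] satisfying (1 − φ(k)) / (L(|k|) |k|^α) → 1 as |k| → 0, where 0 < α ≤ 2 and L : (0,∞) → (0,∞) is slowly varying at zero. Then for every μ with 0 < μ < α, E[|X|^μ] < ∞. -/

import Mathlib

open MeasureTheory ProbabilityTheory Filter Real Topology

noncomputable section

/-- Characteristic function with the convention `φ(k) = E[exp(i k·X)]`. -/
def charFn' {d : ℕ} {Ω : Type*} [MeasureSpace Ω]
    (X : Ω → EuclideanSpace ℝ (Fin d)) (k : EuclideanSpace ℝ (Fin d)) : ℂ :=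
  ∫ ω, Complex.exp (Complex.I * ((inner ℝ k (X ω) : ℝ) : ℂ))

/-- `L` is slowly varying at zero: for all `a > 0`, `L(at)/L(t) → 1` as `t → 0⁺`. -/
def SlowlyVaryingAtZero (L : ℝ → ℝ) : Prop :=
  ∀ a : ℝ, 0 < a → Filter.Tendsto (fun t => L (a * t) / L t) (𝓝[>] (0 : ℝ)) (𝓝 1)

/-! ### Auxiliary lemmas -/

lemma aux_one_sub_cos_ge {x : ℝ} (hx : |x| ≤ 1) : x ^ 2 / 5 ≤ 1 - Real.cos x := by
  have hpi : |x| ≤ Real.pi := hx.trans (by linarith [Real.pi_gt_three])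
  have h := Real.cos_le_one_sub_mul_cos_sq hpi
  have hpi2 : Real.pi ^ 2 ≤ 10 := by nlinarith [Real.pi_lt_d2, Real.pi_gt_three]
  have hpp : (0:ℝ) < Real.pi ^ 2 := by positivity
  have h5 : x ^ 2 / 5 ≤ 2 / Real.pi ^ 2 * x ^ 2 := by
    rw [div_mul_eq_mul_div, div_le_div_iff₀ (by norm_num : (0:ℝ) < 5) hpp]
    nlinarith [sq_nonneg x]
  linarith

lemma aux_one_sub_cos_le (x : ℝ) : 1 - Real.cos x ≤ x ^ 2 / 2 := by
  have := Real.one_sub_sq_div_two_le_cos (x := x)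
  linarith

/-- Two-variable rpow subadditivity over ℝ. -/
lemma aux_rpow_add_le {a b p : ℝ} (ha : 0 ≤ a) (hb : 0 ≤ b) (hp0 : 0 ≤ p) (hp1 : p ≤ 1) :
    (a + b) ^ p ≤ a ^ p + b ^ p := by
  have h := NNReal.rpow_add_le_add_rpow a.toNNReal b.toNNReal hp0 hp1
  have h2 : ((a.toNNReal + b.toNNReal : NNReal) : ℝ) = a + b := by
    simp [Real.coe_toNNReal _ ha, Real.coe_toNNReal _ hb]
  calc (a + b) ^ p = (((a.toNNReal + b.toNNReal : NNReal) : ℝ)) ^ p := by rw [h2]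
    _ = (((a.toNNReal + b.toNNReal) ^ p : NNReal) : ℝ) := by rw [NNReal.coe_rpow]
    _ ≤ ((a.toNNReal ^ p + b.toNNReal ^ p : NNReal) : ℝ) := by exact_mod_cast h
    _ = a ^ p + b ^ p := by
        push_cast [NNReal.coe_rpow, Real.coe_toNNReal _ ha, Real.coe_toNNReal _ hb]
        ring

lemma aux_rpow_sum_le {ι : Type*} (s : Finset ι) (f : ι → ℝ) (hf : ∀ i, 0 ≤ f i)
    {p : ℝ} (hp0 : 0 < p) (hp1 : p ≤ 1) :
    (∑ i ∈ s, f i) ^ p ≤ ∑ i ∈ s, f i ^ p := by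
  induction s using Finset.cons_induction with
  | empty => simp [Real.zero_rpow hp0.ne']
  | cons a s ha ih =>
    rw [Finset.sum_cons, Finset.sum_cons]
    calc (f a + ∑ i ∈ s, f i) ^ p ≤ f a ^ p + (∑ i ∈ s, f i) ^ p :=
          aux_rpow_add_le (hf a) (Finset.sum_nonneg fun i _ => hf i) hp0.le hp1
      _ ≤ f a ^ p + ∑ i ∈ s, f i ^ p := by linarith

lemma aux_norm_rpow_le_sum {d : ℕ} {μ : ℝ} (hμ0 : 0 < μ) (hμ2 : μ ≤ 2)
    (x : EuclideanSpace ℝ (Fin d)) :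
    ‖x‖ ^ μ ≤ ∑ j : Fin d, |x j| ^ μ := by
  have hs : ∀ j : Fin d, (0:ℝ) ≤ |x j| ^ 2 := fun j => sq_nonneg _
  have hsum : (0:ℝ) ≤ ∑ j : Fin d, |x j| ^ 2 := Finset.sum_nonneg fun j _ => hs j
  have hxe : ‖x‖ = Real.sqrt (∑ j : Fin d, |x j| ^ 2) := by
    simp [EuclideanSpace.norm_eq, Real.norm_eq_abs]
  have h1 : ‖x‖ ^ μ = (∑ j : Fin d, |x j| ^ 2) ^ (1 / 2 * μ) := by
    rw [hxe, Real.sqrt_eq_rpow, ← Real.rpow_mul hsum]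
  rw [h1]
  have hp0 : 0 < 1 / 2 * μ := by positivity
  have hp1 : 1 / 2 * μ ≤ 1 := by linarith
  calc (∑ j : Fin d, |x j| ^ 2) ^ (1 / 2 * μ)
      ≤ ∑ j : Fin d, (|x j| ^ 2) ^ (1 / 2 * μ) :=
        aux_rpow_sum_le _ _ hs hp0 hp1
    _ = ∑ j : Fin d, |x j| ^ μ := by
        refine Finset.sum_congr rfl fun j _ => ?_
        rw [← Real.rpow_natCast |x j| 2, ← Real.rpow_mul (abs_nonneg _)]
        congr 1
        push_cast
        ring

/-- nat-pow / rpow exchange. -/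
lemma aux_pow_rpow (b : ℝ) (m : ℕ) : ((2:ℝ) ^ b) ^ m = ((2:ℝ) ^ m) ^ b := by
  rw [← Real.rpow_natCast ((2:ℝ) ^ b) m, ← Real.rpow_natCast (2:ℝ) m,
    ← Real.rpow_mul (by norm_num : (0:ℝ) ≤ 2), ← Real.rpow_mul (by norm_num : (0:ℝ) ≤ 2),
    mul_comm]

/-- The master pointwise inequality. -/
lemma aux_master {μ : ℝ} (hμ0 : 0 < μ) (hμ2 : μ < 2) :
    ∃ c : ℝ, 0 < c ∧ ∀ y : ℝ,
      (Summable fun m : ℕ => ((2:ℝ) ^ μ) ^ m * (1 - Real.cos (((2:ℝ) ^ m)⁻¹ * y))) ∧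
      |y| ^ μ ≤ 1 + c * ∑' m : ℕ, ((2:ℝ) ^ μ) ^ m * (1 - Real.cos (((2:ℝ) ^ m)⁻¹ * y)) := by
  set q : ℝ := (2:ℝ) ^ (μ - 2 : ℝ) with hqdef
  have hq0 : 0 < q := Real.rpow_pos_of_pos (by norm_num) _
  have hq1 : q < 1 := Real.rpow_lt_one_of_one_lt_of_neg one_lt_two (by linarith)
  set a : ℝ → ℕ → ℝ := fun y m => ((2:ℝ) ^ μ) ^ m * (1 - Real.cos (((2:ℝ) ^ m)⁻¹ * y))
    with hadef
  have hP : ∀ m : ℕ, (0:ℝ) < (2:ℝ) ^ m := fun m => by positivity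
  have ha_nonneg : ∀ y m, 0 ≤ a y m := by
    intro y m
    have := Real.cos_le_one (((2:ℝ) ^ m)⁻¹ * y)
    have h2 : (0:ℝ) ≤ ((2:ℝ) ^ μ) ^ m := by positivity
    have : 0 ≤ 1 - Real.cos (((2:ℝ) ^ m)⁻¹ * y) := by linarith
    exact mul_nonneg h2 this
  -- key identity : ((2:ℝ)^μ)^m * ((2^m)⁻¹)^2 = q^m
  have hkey : ∀ m : ℕ, ((2:ℝ) ^ μ) ^ m * (((2:ℝ) ^ m)⁻¹) ^ 2 = q ^ m := by
    intro m
    rw [aux_pow_rpow μ m, hqdef, aux_pow_rpow (μ - 2) m, inv_pow,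
      ← Real.rpow_natCast ((2:ℝ) ^ m) 2, ← Real.rpow_neg (hP m).le,
      ← Real.rpow_add (hP m)]
    congr 1
  have ha_le : ∀ y m, a y m ≤ y ^ 2 / 2 * q ^ m := by
    intro y m
    have h1 : 1 - Real.cos (((2:ℝ) ^ m)⁻¹ * y) ≤ (((2:ℝ) ^ m)⁻¹ * y) ^ 2 / 2 :=
      aux_one_sub_cos_le _
    have h2 : (0:ℝ) ≤ ((2:ℝ) ^ μ) ^ m := by positivity
    calc a y m ≤ ((2:ℝ) ^ μ) ^ m * ((((2:ℝ) ^ m)⁻¹ * y) ^ 2 / 2) := by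
          exact mul_le_mul_of_nonneg_left h1 h2
      _ = y ^ 2 / 2 * (((2:ℝ) ^ μ) ^ m * (((2:ℝ) ^ m)⁻¹) ^ 2) := by ring
      _ = y ^ 2 / 2 * q ^ m := by rw [hkey m]
  have hsumgeo : Summable fun m : ℕ => q ^ m := summable_geometric_of_lt_one hq0.le hq1
  have hsummable : ∀ y, Summable (a y) := by
    intro y
    refine Summable.of_nonneg_of_le (ha_nonneg y) (ha_le y) ?_
    exact hsumgeo.mul_left _
  have h1q : (0:ℝ) < 1 - q := by linarith
  have hcpos : (0:ℝ) < 5 * (1 - q) * q⁻¹ :=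
    mul_pos (mul_pos (by norm_num) h1q) (inv_pos.mpr hq0)
  refine ⟨5 * (1 - q) * q⁻¹, hcpos, fun y => ⟨hsummable y, ?_⟩⟩
  set c : ℝ := 5 * (1 - q) * q⁻¹ with hcdef
  have hc0 : 0 < c := hcpos
  have hS_nonneg : 0 ≤ ∑' m, a y m := tsum_nonneg (ha_nonneg y)
  by_cases hy : |y| ≤ 1
  · have h1 : |y| ^ μ ≤ 1 := Real.rpow_le_one (abs_nonneg _) hy hμ0.le
    nlinarith [mul_nonneg hc0.le hS_nonneg]
  push_neg at hy
  have hy0 : (0:ℝ) < |y| := lt_trans one_pos hy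
  -- find m0 with |y| ≤ 2 ^ m0 ≤ 2 * |y|
  set l : ℝ := Real.logb 2 |y| with hldef
  have hl0 : 0 ≤ l := Real.logb_nonneg one_lt_two hy.le
  set m0 : ℕ := ⌊l⌋₊ + 1 with hm0def
  have hyl : (2:ℝ) ^ l = |y| := Real.rpow_logb (by norm_num) (by norm_num) hy0
  have h1 : |y| ≤ (2:ℝ) ^ m0 := by
    have hlt : l ≤ (m0 : ℝ) := by
      rw [hm0def]
      push_cast
      exact (Nat.lt_floor_add_one l).le
    calc |y| = (2:ℝ) ^ l := hyl.symm
      _ ≤ (2:ℝ) ^ (m0 : ℝ) := Real.rpow_le_rpow_of_exponent_le one_le_two hlt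
      _ = (2:ℝ) ^ m0 := Real.rpow_natCast 2 m0
  have h2 : (2:ℝ) ^ m0 ≤ 2 * |y| := by
    have hlt : (m0 : ℝ) ≤ l + 1 := by
      rw [hm0def]
      push_cast
      have := Nat.floor_le hl0
      linarith
    calc (2:ℝ) ^ m0 = (2:ℝ) ^ (m0 : ℝ) := (Real.rpow_natCast 2 m0).symm
      _ ≤ (2:ℝ) ^ (l + 1) := Real.rpow_le_rpow_of_exponent_le one_le_two hlt
      _ = (2:ℝ) ^ l * (2:ℝ) ^ (1:ℝ) := Real.rpow_add (by norm_num) _ _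
      _ = 2 * |y| := by rw [hyl, Real.rpow_one]; ring
  -- tail sum lower bound
  have htail_eq := (hsummable y).sum_add_tsum_nat_add m0
  have hhead : 0 ≤ ∑ i ∈ Finset.range m0, a y i :=
    Finset.sum_nonneg fun i _ => ha_nonneg y i
  have hS_ge : ∑' k, a y (k + m0) ≤ ∑' m, a y m := by linarith
  -- pointwise lower bound on the tail terms
  have hterm : ∀ k : ℕ, y ^ 2 / 5 * q ^ m0 * q ^ k ≤ a y (k + m0) := by
    intro k
    have hx1 : |(((2:ℝ) ^ (k + m0))⁻¹ * y)| ≤ 1 := by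
      rw [abs_mul, abs_inv, abs_pow]
      simp only [abs_two]
      rw [inv_mul_le_iff₀ (by positivity), mul_one]
      calc |y| ≤ (2:ℝ) ^ m0 := h1
        _ ≤ (2:ℝ) ^ (k + m0) := pow_le_pow_right₀ one_le_two (Nat.le_add_left m0 k)
    have hcos := aux_one_sub_cos_ge hx1
    have h2 : (0:ℝ) ≤ ((2:ℝ) ^ μ) ^ (k + m0) := by positivity
    calc y ^ 2 / 5 * q ^ m0 * q ^ k
        = y ^ 2 / 5 * q ^ (k + m0) := by rw [pow_add]; ring
      _ = ((2:ℝ) ^ μ) ^ (k + m0) * ((((2:ℝ) ^ (k + m0))⁻¹ * y) ^ 2 / 5) := by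
          rw [← hkey (k + m0)]; ring
      _ ≤ ((2:ℝ) ^ μ) ^ (k + m0) * (1 - Real.cos (((2:ℝ) ^ (k + m0))⁻¹ * y)) :=
          mul_le_mul_of_nonneg_left hcos h2
      _ = a y (k + m0) := rfl
  have htail_ge : y ^ 2 / 5 * q ^ m0 * (1 - q)⁻¹ ≤ ∑' k, a y (k + m0) := by
    have hsl : Summable fun k : ℕ => y ^ 2 / 5 * q ^ m0 * q ^ k := hsumgeo.mul_left _
    have hsr : Summable fun k : ℕ => a y (k + m0) := (summable_nat_add_iff m0).mpr (hsummable y)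
    calc y ^ 2 / 5 * q ^ m0 * (1 - q)⁻¹
        = ∑' k : ℕ, y ^ 2 / 5 * q ^ m0 * q ^ k := by
          rw [tsum_mul_left, tsum_geometric_of_lt_one hq0.le hq1]
      _ ≤ ∑' k, a y (k + m0) := Summable.tsum_le_tsum hterm hsl hsr
  -- connect with |y|^μ
  have hqm0 : (2 * |y|) ^ (μ - 2 : ℝ) ≤ q ^ m0 := by
    have := Real.rpow_le_rpow_of_nonpos (by positivity : (0:ℝ) < (2:ℝ)^m0) h2 (by linarith : μ - 2 ≤ 0)
    calc (2 * |y|) ^ (μ - 2 : ℝ) ≤ ((2:ℝ) ^ m0) ^ (μ - 2 : ℝ) := by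
          exact Real.rpow_le_rpow_of_nonpos (by positivity) h2 (by linarith)
      _ = q ^ m0 := (aux_pow_rpow (μ - 2) m0).symm
  have hy2 : y ^ 2 = |y| ^ (2:ℝ) := by
    rw [show ((2:ℝ)) = ((2:ℕ):ℝ) by norm_num, Real.rpow_natCast, sq_abs]
  have hid : y ^ 2 * (2 * |y|) ^ (μ - 2 : ℝ) = q * |y| ^ μ := by
    calc y ^ 2 * (2 * |y|) ^ (μ - 2 : ℝ)
        = (2:ℝ) ^ (μ - 2 : ℝ) * (|y| ^ (2:ℝ) * |y| ^ (μ - 2 : ℝ)) := by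
          rw [Real.mul_rpow (by norm_num) (abs_nonneg y), hy2]; ring
      _ = q * |y| ^ μ := by
          rw [← Real.rpow_add hy0, show (2:ℝ) + (μ - 2) = μ by ring, hqdef]
  have hfinal : q * |y| ^ μ / 5 * (1 - q)⁻¹ ≤ ∑' m, a y m := by
    calc q * |y| ^ μ / 5 * (1 - q)⁻¹
        = y ^ 2 * (2 * |y|) ^ (μ - 2 : ℝ) / 5 * (1 - q)⁻¹ := by rw [hid]
      _ ≤ y ^ 2 * q ^ m0 / 5 * (1 - q)⁻¹ := by
          have h5 : (0:ℝ) ≤ y ^ 2 := sq_nonneg y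
          have h6 : (0:ℝ) ≤ (1 - q)⁻¹ := by
            have : (0:ℝ) < 1 - q := by linarith
            positivity
          have := mul_le_mul_of_nonneg_left hqm0 h5
          nlinarith
      _ = y ^ 2 / 5 * q ^ m0 * (1 - q)⁻¹ := by ring
      _ ≤ ∑' k, a y (k + m0) := htail_ge
      _ ≤ ∑' m, a y m := hS_ge
  have hmul : |y| ^ μ ≤ c * ∑' m, a y m := by
    have hq1' : (0:ℝ) < 1 - q := by linarith
    have := mul_le_mul_of_nonneg_left hfinal hc0.le
    calc |y| ^ μ = c * (q * |y| ^ μ / 5 * (1 - q)⁻¹) := by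
          rw [hcdef]; field_simp
      _ ≤ c * ∑' m, a y m := this
  linarith

/-- Geometric-tail summability in `ℝ≥0∞`. -/
lemma aux_tsum_lt_top {f : ℕ → ENNReal} {C r : ENNReal} (hC : C ≠ ⊤) (hr : r < 1)
    (hf : ∀ m, f m ≠ ⊤) (N : ℕ) (h : ∀ m, N ≤ m → f m ≤ C * r ^ m) :
    ∑' m, f m < ⊤ := by
  have hb : ∀ m, f m ≤ (if m < N then f m else 0) + C * r ^ m := by
    intro m
    by_cases hm : m < N
    · rw [if_pos hm]; exact le_self_add
    · rw [if_neg hm, zero_add]; exact h m (not_lt.mp hm)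
  calc ∑' m, f m ≤ ∑' m, ((if m < N then f m else 0) + C * r ^ m) :=
        ENNReal.tsum_le_tsum hb
    _ = (∑' m, (if m < N then f m else 0)) + C * ∑' m, r ^ m := by
        rw [ENNReal.tsum_add, ENNReal.tsum_mul_left]
    _ < ⊤ := by
        apply ENNReal.add_lt_top.mpr
        constructor
        · rw [tsum_eq_sum (s := Finset.range N)
            (fun m hm => by rw [if_neg (by simpa using hm)])]
          refine ENNReal.sum_lt_top.mpr fun i _ => ?_
          split
          · exact (hf i).lt_top
          · simp
        · rw [ENNReal.tsum_geometric]
          refine ENNReal.mul_lt_top hC.lt_top ?_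
          rw [ENNReal.inv_lt_top]
          refine pos_iff_ne_zero.mpr fun h0 => ?_
          exact hr.not_ge (tsub_eq_zero_iff_le.mp h0)

lemma aux_integral_one_sub_cos {Ω : Type*} [MeasureSpace Ω]
    [IsProbabilityMeasure (ℙ : Measure Ω)]
    {d : ℕ} (X : Ω → EuclideanSpace ℝ (Fin d)) (hmeas : Measurable X) (j : Fin d) (s : ℝ) :
    ∫ ω, (1 - Real.cos (s * X ω j)) ∂ℙ
      = (1 - charFn' X (s • EuclideanSpace.single j (1:ℝ))).re := by
  have hY : Measurable fun ω => X ω j := (measurable_pi_apply j).comp ((WithLp.measurable_ofLp 2 _).comp hmeas)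
  have hinner : ∀ ω, (inner ℝ (s • EuclideanSpace.single j (1:ℝ)) (X ω) : ℝ) = s * X ω j := by
    intro ω
    rw [real_inner_smul_left, EuclideanSpace.inner_single_left]
    simp
  have hmc : Measurable fun ω => Real.cos (s * X ω j) :=
    Real.continuous_cos.measurable.comp (hY.const_mul s)
  have hic : Integrable (fun ω => Real.cos (s * X ω j)) ℙ := by
    refine (integrable_const (1:ℝ)).mono' hmc.aestronglyMeasurable (ae_of_all _ fun ω => ?_)
    rw [Real.norm_eq_abs]
    exact Real.abs_cos_le_one _
  have hme : Measurable fun ω => Complex.exp (Complex.I * ((s * X ω j : ℝ) : ℂ)) :=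
    Complex.measurable_exp.comp ((Complex.measurable_ofReal.comp (hY.const_mul s)).const_mul _)
  have hie : Integrable (fun ω => Complex.exp (Complex.I * ((s * X ω j : ℝ) : ℂ))) ℙ := by
    refine (integrable_const (1:ℝ)).mono' hme.aestronglyMeasurable (ae_of_all _ fun ω => ?_)
    rw [Complex.norm_exp]
    simp
  have hφ : charFn' X (s • EuclideanSpace.single j (1:ℝ))
      = ∫ ω, Complex.exp (Complex.I * ((s * X ω j : ℝ) : ℂ)) ∂ℙ := by
    unfold charFn'
    exact integral_congr_ae (ae_of_all _ fun ω => by simp only [hinner ω])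
  rw [integral_sub (integrable_const 1) hic, integral_const, probReal_univ]
  rw [hφ, Complex.sub_re, Complex.one_re]
  simp only [ENNReal.toReal_one, smul_eq_mul, one_mul]
  congr 1
  have h3 := integral_re hie
  simp only [RCLike.re_to_complex] at h3
  rw [← h3]
  refine integral_congr_ae (ae_of_all _ fun ω => ?_)
  show Real.cos (s * X ω j) = (Complex.exp (Complex.I * ((s * X ω j : ℝ) : ℂ))).re
  rw [mul_comm Complex.I]
  exact (Complex.exp_ofReal_mul_I_re _).symm

lemma aux_moment {Ω : Type*} [MeasureSpace Ω] [IsProbabilityMeasure (ℙ : Measure Ω)]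
    (Y : Ω → ℝ) (hY : Measurable Y) {μ : ℝ} (hμ0 : 0 < μ) (hμ2 : μ < 2)
    {C r : ℝ} (hC : 0 ≤ C) (hr0 : 0 ≤ r) (hr1 : r < 1) (N : ℕ)
    (hB : ∀ m : ℕ, N ≤ m →
      (((2:ℝ) ^ μ) ^ m * ∫ ω, (1 - Real.cos (((2:ℝ) ^ m)⁻¹ * Y ω)) ∂ℙ) ≤ C * r ^ m) :
    ∫⁻ ω, ENNReal.ofReal (|Y ω| ^ μ) ∂ℙ < ⊤ := by
  obtain ⟨c, hc, hma⟩ := aux_master hμ0 hμ2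
  set g : ℕ → Ω → ℝ := fun m ω => ((2:ℝ) ^ μ) ^ m * (1 - Real.cos (((2:ℝ) ^ m)⁻¹ * Y ω))
    with hgdef
  have hg_meas : ∀ m, Measurable (g m) := fun m =>
    (measurable_const.sub (Real.continuous_cos.measurable.comp (hY.const_mul _))).const_mul _
  have hg_nonneg : ∀ m ω, 0 ≤ g m ω := by
    intro m ω
    have h1 := Real.cos_le_one (((2:ℝ) ^ m)⁻¹ * Y ω)
    have h2 : (0:ℝ) ≤ ((2:ℝ) ^ μ) ^ m := by positivity
    exact mul_nonneg h2 (by linarith)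
  have hg_int : ∀ m, Integrable (g m) ℙ := by
    intro m
    refine (integrable_const (((2:ℝ) ^ μ) ^ m * 2)).mono'
      (hg_meas m).aestronglyMeasurable (ae_of_all _ fun ω => ?_)
    rw [Real.norm_eq_abs, abs_of_nonneg (hg_nonneg m ω)]
    have h1 := Real.neg_one_le_cos (((2:ℝ) ^ m)⁻¹ * Y ω)
    have h2 : (0:ℝ) ≤ ((2:ℝ) ^ μ) ^ m := by positivity
    have : 1 - Real.cos (((2:ℝ) ^ m)⁻¹ * Y ω) ≤ 2 := by linarith
    exact mul_le_mul_of_nonneg_left this h2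
  have key : ∀ m, ∫⁻ ω, ENNReal.ofReal (g m ω) ∂ℙ = ENNReal.ofReal (∫ ω, g m ω ∂ℙ) :=
    fun m => (ofReal_integral_eq_lintegral_ofReal (hg_int m)
      (ae_of_all _ fun ω => hg_nonneg m ω)).symm
  have hsum_fin : ∑' m, ∫⁻ ω, ENNReal.ofReal (g m ω) ∂ℙ < ⊤ := by
    refine aux_tsum_lt_top (C := ENNReal.ofReal C) (r := ENNReal.ofReal r)
      ENNReal.ofReal_ne_top (ENNReal.ofReal_lt_one.mpr hr1)
      (fun m => by rw [key m]; exact ENNReal.ofReal_ne_top) N (fun m hm => ?_)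
    rw [key m]
    have h2 : ∫ ω, g m ω ∂ℙ = ((2:ℝ) ^ μ) ^ m * ∫ ω, (1 - Real.cos (((2:ℝ) ^ m)⁻¹ * Y ω)) ∂ℙ :=
      integral_const_mul _ _
    calc ENNReal.ofReal (∫ ω, g m ω ∂ℙ) ≤ ENNReal.ofReal (C * r ^ m) := by
          refine ENNReal.ofReal_le_ofReal ?_
          rw [h2]
          exact hB m hm
      _ = ENNReal.ofReal C * ENNReal.ofReal r ^ m := by
          rw [ENNReal.ofReal_mul hC, ENNReal.ofReal_pow hr0]
  have step1 : ∫⁻ ω, ENNReal.ofReal (|Y ω| ^ μ) ∂ℙ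
      ≤ ∫⁻ ω, (1 + ENNReal.ofReal c * ∑' m, ENNReal.ofReal (g m ω)) ∂ℙ := by
    refine lintegral_mono fun ω => ?_
    obtain ⟨hsummable, hineq⟩ := hma (Y ω)
    calc ENNReal.ofReal (|Y ω| ^ μ)
        ≤ ENNReal.ofReal (1 + c * ∑' m, g m ω) := ENNReal.ofReal_le_ofReal hineq
      _ = 1 + ENNReal.ofReal (c * ∑' m, g m ω) := by
          rw [ENNReal.ofReal_add (by norm_num)
            (mul_nonneg hc.le (tsum_nonneg fun m => hg_nonneg m ω)), ENNReal.ofReal_one]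
      _ = 1 + ENNReal.ofReal c * ENNReal.ofReal (∑' m, g m ω) := by
          rw [ENNReal.ofReal_mul hc.le]
      _ = 1 + ENNReal.ofReal c * ∑' m, ENNReal.ofReal (g m ω) := by
          rw [ENNReal.ofReal_tsum_of_nonneg (fun m => hg_nonneg m ω) hsummable]
  have step2 : ∫⁻ ω, (1 + ENNReal.ofReal c * ∑' m, ENNReal.ofReal (g m ω)) ∂ℙ
      = 1 + ENNReal.ofReal c * ∑' m, ∫⁻ ω, ENNReal.ofReal (g m ω) ∂ℙ := by
    rw [lintegral_add_left measurable_const, lintegral_const, measure_univ, mul_one,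
      lintegral_const_mul' _ _ ENNReal.ofReal_ne_top,
      lintegral_tsum fun m => ((hg_meas m).ennreal_ofReal).aemeasurable]
  refine lt_of_le_of_lt (step1.trans step2.le) ?_
  exact ENNReal.add_lt_top.mpr ⟨ENNReal.one_lt_top,
    ENNReal.mul_lt_top ENNReal.ofReal_lt_top hsum_fin⟩

theorem statement19
    {Ω : Type*} [MeasureSpace Ω] [IsProbabilityMeasure (ℙ : Measure Ω)]
    (d : ℕ) (X : Ω → EuclideanSpace ℝ (Fin d)) (hmeas : Measurable X)
    (α : ℝ) (hα : α ∈ Set.Ioc (0 : ℝ) 2)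
    (L : ℝ → ℝ) (hLpos : ∀ t : ℝ, 0 < t → 0 < L t)
    (hL : SlowlyVaryingAtZero L)
    (hphi : Tendsto
      (fun k : EuclideanSpace ℝ (Fin d) =>
        (1 - charFn' X k) / ((L ‖k‖ * ‖k‖ ^ α : ℝ) : ℂ))
      (𝓝[≠] (0 : EuclideanSpace ℝ (Fin d))) (𝓝 1)) :
    ∀ μ : ℝ, 0 < μ → μ < α → ∫⁻ ω, (‖X ω‖₊ : ENNReal) ^ μ ∂ℙ < ⊤ := by
  intro μ hμ0 hμα
  obtain ⟨hα0, hα2⟩ := hα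
  have hμ2 : μ < 2 := lt_of_lt_of_le hμα hα2
  have hYj : ∀ j : Fin d, Measurable fun ω => X ω j := fun j =>
    (measurable_pi_apply j).comp ((WithLp.measurable_ofLp 2 _).comp hmeas)
  have hmeas_j : ∀ j : Fin d, Measurable fun ω => ENNReal.ofReal (|X ω j| ^ μ) := by
    intro j
    exact (((continuous_abs.rpow_const fun _ => Or.inr hμ0.le).measurable).comp
      (hYj j)).ennreal_ofReal
  have hmono : ∫⁻ ω, (‖X ω‖₊ : ENNReal) ^ μ ∂ℙ
      ≤ ∑ j : Fin d, ∫⁻ ω, ENNReal.ofReal (|X ω j| ^ μ) ∂ℙ := by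
    rw [← lintegral_finset_sum _ fun j _ => hmeas_j j]
    refine lintegral_mono fun ω => ?_
    have hrw : (‖X ω‖₊ : ENNReal) ^ μ = ENNReal.ofReal (‖X ω‖ ^ μ) := by
      rw [← ENNReal.ofReal_coe_nnreal, coe_nnnorm, ENNReal.ofReal_rpow_of_nonneg (norm_nonneg _) hμ0.le]
    rw [hrw, ← ENNReal.ofReal_sum_of_nonneg fun j _ => Real.rpow_nonneg (abs_nonneg _) _]
    exact ENNReal.ofReal_le_ofReal (aux_norm_rpow_le_sum hμ0 hμ2.le (X ω))
  refine lt_of_le_of_lt hmono (ENNReal.sum_lt_top.mpr fun j _ => ?_)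
  -- dyadic scales
  set t : ℕ → ℝ := fun m => ((2:ℝ) ^ m)⁻¹ with htdef
  have htpos : ∀ m, 0 < t m := fun m => by positivity
  have ht0 : Tendsto t atTop (𝓝 0) := by
    have h := tendsto_pow_atTop_nhds_zero_of_lt_one (by norm_num : (0:ℝ) ≤ 2⁻¹)
      (by norm_num : (2:ℝ)⁻¹ < 1)
    refine h.congr fun m => ?_
    rw [htdef, inv_pow]
  have htlim : Tendsto t atTop (𝓝[>] (0:ℝ)) :=
    tendsto_nhdsWithin_iff.mpr ⟨ht0, Eventually.of_forall fun m => htpos m⟩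
  set e : EuclideanSpace ℝ (Fin d) := EuclideanSpace.single j (1:ℝ) with hedef
  have he : ‖e‖ = 1 := by rw [hedef, EuclideanSpace.norm_single]; norm_num
  have hene : e ≠ 0 := by
    intro h
    rw [h] at he
    simp at he
  have hek : Tendsto (fun m => t m • e) atTop (𝓝[≠] (0 : EuclideanSpace ℝ (Fin d))) := by
    refine tendsto_nhdsWithin_iff.mpr ⟨?_, Eventually.of_forall fun m => ?_⟩
    · simpa using ht0.smul_const e
    · exact smul_ne_zero (htpos m).ne' hene
  have hns : ∀ m, ‖t m • e‖ = t m := fun m => by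
    rw [norm_smul, he, mul_one, Real.norm_eq_abs, abs_of_pos (htpos m)]
  have hpath : Tendsto
      (fun m => (1 - charFn' X (t m • e)) / ((L (t m) * t m ^ α : ℝ) : ℂ)) atTop (𝓝 1) := by
    have h := hphi.comp hek
    refine h.congr fun m => ?_
    simp only [Function.comp_apply, hns m]
  have habs : ∀ᶠ m in atTop,
      ‖1 - charFn' X (t m • e)‖ ≤ 2 * (L (t m) * t m ^ α) := by
    have h2 : Tendsto
        (fun m => ‖(1 - charFn' X (t m • e)) / ((L (t m) * t m ^ α : ℝ) : ℂ)‖)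
        atTop (𝓝 1) := by
      have h3 := hpath.norm
      simpa using h3
    filter_upwards [h2.eventually_le_const (by norm_num : (1:ℝ) < 2)] with m hm
    have hD : (0:ℝ) < L (t m) * t m ^ α :=
      mul_pos (hLpos _ (htpos m)) (Real.rpow_pos_of_pos (htpos m) α)
    rw [norm_div, Complex.norm_real, Real.norm_eq_abs, abs_of_pos hD, div_le_iff₀ hD] at hm
    linarith
  -- slow variation gives geometric control
  set ρ : ℝ := (2:ℝ) ^ ((α - μ)/2 : ℝ) with hρdef
  have hρ1 : 1 < ρ := by
    rw [hρdef]
    exact (Real.one_lt_rpow_iff_of_pos (by norm_num)).mpr (Or.inl ⟨one_lt_two, by linarith⟩)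
  have hLdy : Tendsto (fun m => L (t (m+1)) / L (t m)) atTop (𝓝 1) := by
    have h := (hL (1/2) (by norm_num)).comp htlim
    refine h.congr fun m => ?_
    simp only [Function.comp_apply]
    congr 2
    rw [htdef]
    simp only
    rw [pow_succ]
    field_simp
  have hev : ∀ᶠ m in atTop, L (t (m+1)) ≤ ρ * L (t m) := by
    filter_upwards [hLdy.eventually_le_const hρ1] with m hm
    rw [div_le_iff₀ (hLpos _ (htpos m))] at hm
    linarith
  obtain ⟨N1, hN1⟩ := eventually_atTop.mp hev
  obtain ⟨N2, hN2⟩ := eventually_atTop.mp habs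
  set N := max N1 N2 with hNdef
  have hgeom : ∀ k : ℕ, L (t (N + k)) ≤ L (t N) * ρ ^ k := by
    intro k
    induction k with
    | zero => simp
    | succ k ih =>
      have h1 : L (t (N + k + 1)) ≤ ρ * L (t (N + k)) :=
        hN1 _ (le_trans (le_max_left _ _) (Nat.le_add_right _ _))
      calc L (t (N + (k+1))) = L (t (N + k + 1)) := rfl
        _ ≤ ρ * L (t (N + k)) := h1
        _ ≤ ρ * (L (t N) * ρ ^ k) := mul_le_mul_of_nonneg_left ih (by linarith)
        _ = L (t N) * ρ ^ (k+1) := by ring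
  -- constants
  set sc : ℝ := (2:ℝ) ^ (μ - α : ℝ) with hscdef
  have hsc0 : 0 < sc := Real.rpow_pos_of_pos two_pos _
  have hLN0 : 0 < L (t N) := hLpos _ (htpos N)
  set Cc : ℝ := 2 * L (t N) with hCcdef
  set rr : ℝ := ρ * sc with hrrdef
  have hrr0 : (0:ℝ) ≤ rr := by positivity
  have hrr1 : rr < 1 := by
    rw [hrrdef, hρdef, hscdef, ← Real.rpow_add two_pos]
    exact Real.rpow_lt_one_of_one_lt_of_neg one_lt_two (by linarith)
  have hCc0 : (0:ℝ) ≤ Cc := by positivity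
  have hws : ∀ m : ℕ, ((2:ℝ) ^ μ) ^ m * t m ^ α = sc ^ m := by
    intro m
    rw [htdef]
    simp only
    rw [aux_pow_rpow μ m, hscdef, aux_pow_rpow (μ - α) m,
      Real.inv_rpow (by positivity : (0:ℝ) ≤ (2:ℝ) ^ m),
      ← Real.rpow_neg (by positivity : (0:ℝ) ≤ (2:ℝ) ^ m),
      ← Real.rpow_add (by positivity : (0:ℝ) < (2:ℝ) ^ m)]
    congr 1
  refine aux_moment (fun ω => X ω j) (hYj j) hμ0 hμ2 hCc0 hrr0 hrr1 N fun m hm => ?_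
  have hint : ∫ ω, (1 - Real.cos (((2:ℝ) ^ m)⁻¹ * X ω j)) ∂ℙ
      = (1 - charFn' X (t m • e)).re := by
    rw [show ((2:ℝ) ^ m)⁻¹ = t m from rfl, hedef]
    exact aux_integral_one_sub_cos X hmeas j (t m)
  rw [hint]
  have hre : (1 - charFn' X (t m • e)).re ≤ 2 * (L (t m) * t m ^ α) :=
    le_trans (Complex.re_le_norm _) (hN2 m (le_trans (le_max_right _ _) hm))
  have hpow_nonneg : (0:ℝ) ≤ ((2:ℝ) ^ μ) ^ m := by positivity
  have hLm : L (t m) ≤ L (t N) * ρ ^ (m - N) := by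
    have h1 := hgeom (m - N)
    rwa [Nat.add_sub_cancel' hm] at h1
  have hρm : ρ ^ (m - N) ≤ ρ ^ m := pow_le_pow_right₀ hρ1.le (Nat.sub_le m N)
  calc ((2:ℝ) ^ μ) ^ m * (1 - charFn' X (t m • e)).re
      ≤ ((2:ℝ) ^ μ) ^ m * (2 * (L (t m) * t m ^ α)) :=
        mul_le_mul_of_nonneg_left hre hpow_nonneg
    _ = 2 * L (t m) * (((2:ℝ) ^ μ) ^ m * t m ^ α) := by ring
    _ = 2 * L (t m) * sc ^ m := by rw [hws m]
    _ ≤ 2 * (L (t N) * ρ ^ m) * sc ^ m := by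
        have hsm : (0:ℝ) ≤ sc ^ m := by positivity
        have h4 : L (t m) ≤ L (t N) * ρ ^ m :=
          hLm.trans (mul_le_mul_of_nonneg_left hρm hLN0.le)
        nlinarith
    _ = Cc * rr ^ m := by rw [hCcdef, hrrdef, mul_pow]; ring
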